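/- For every natural number n ≥ 2, Euclidean space ℝⁿ satisfies condition (C) (equivalently, has connected Higson corona), while ℝ does not satisfy condition (C). -/

import Mathlib

open Bornology

def Bornologous {X Y : Type*} [PseudoMetricSpace X] [PseudoMetricSpace Y] (f : X → Y) : Prop :=
  ∀ R : ℝ, 0 < R → ∃ S : ℝ, 0 < S ∧ ∀ x x' : X, dist x x' ≤ R → dist (f x) (f x') ≤ S

def ProperMap {X Y : Type*} [PseudoMetricSpace X] [PseudoMetricSpace Y] (f : X → Y) : Prop :=
  ∀ B : Set Y, IsBounded B → IsBounded (f ⁻¹' B)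

def IsCoarse {X Y : Type*} [PseudoMetricSpace X] [PseudoMetricSpace Y] (f : X → Y) : Prop :=
  Bornologous f ∧ ProperMap f

def Close {X Y : Type*} [PseudoMetricSpace Y] (f g : X → Y) : Prop :=
  ∃ R : ℝ, 0 < R ∧ ∀ x : X, dist (f x) (g x) ≤ R

def coprodDist {X Y : Type*} [MetricSpace X] [MetricSpace Y] (x₀ : X) (y₀ : Y) :
    X ⊕ Y → X ⊕ Y → ℝ
  | Sum.inl a, Sum.inl b => dist a b
  | Sum.inl a, Sum.inr b => dist a x₀ + 1 + dist y₀ b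
  | Sum.inr a, Sum.inl b => dist b x₀ + 1 + dist y₀ a
  | Sum.inr a, Sum.inr b => dist a b

noncomputable def coprodMetric {X Y : Type*} [MetricSpace X] [MetricSpace Y]
    (x₀ : X) (y₀ : Y) : MetricSpace (X ⊕ Y) where
  dist := coprodDist x₀ y₀
  dist_self := by rintro (a | a) <;> simp [coprodDist]
  dist_comm := fun p q => by
    match p, q with
    | Sum.inl a, Sum.inl b => exact dist_comm a b
    | Sum.inl a, Sum.inr b => rfl
    | Sum.inr a, Sum.inl b => rfl
    | Sum.inr a, Sum.inr b => exact dist_comm a b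
  dist_triangle := fun p q r => by
    match p, q, r with
    | Sum.inl a, Sum.inl b, Sum.inl c => exact dist_triangle a b c
    | Sum.inl a, Sum.inl b, Sum.inr c =>
      show dist a x₀ + 1 + dist y₀ c ≤ dist a b + (dist b x₀ + 1 + dist y₀ c)
      have := dist_triangle a b x₀; linarith
    | Sum.inl a, Sum.inr b, Sum.inl c =>
      show dist a c ≤ (dist a x₀ + 1 + dist y₀ b) + (dist c x₀ + 1 + dist y₀ b)
      have h1 := dist_triangle a x₀ c
      have h2 : dist x₀ c = dist c x₀ := dist_comm _ _
      have h3 := dist_nonneg (x := y₀) (y := b)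
      linarith
    | Sum.inl a, Sum.inr b, Sum.inr c =>
      show dist a x₀ + 1 + dist y₀ c ≤ (dist a x₀ + 1 + dist y₀ b) + dist b c
      have := dist_triangle y₀ b c; linarith
    | Sum.inr a, Sum.inl b, Sum.inl c =>
      show dist c x₀ + 1 + dist y₀ a ≤ (dist b x₀ + 1 + dist y₀ a) + dist b c
      have h1 := dist_triangle c b x₀
      have h2 : dist c b = dist b c := dist_comm _ _
      linarith
    | Sum.inr a, Sum.inl b, Sum.inr c =>
      show dist a c ≤ (dist b x₀ + 1 + dist y₀ a) + (dist b x₀ + 1 + dist y₀ c)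
      have h1 := dist_triangle a y₀ c
      have h2 : dist a y₀ = dist y₀ a := dist_comm _ _
      have h3 := dist_nonneg (x := b) (y := x₀)
      linarith
    | Sum.inr a, Sum.inr b, Sum.inl c =>
      show dist c x₀ + 1 + dist y₀ a ≤ dist a b + (dist c x₀ + 1 + dist y₀ b)
      have h1 := dist_triangle y₀ b a
      have h2 : dist b a = dist a b := dist_comm _ _
      linarith
    | Sum.inr a, Sum.inr b, Sum.inr c => exact dist_triangle a b c
  eq_of_dist_eq_zero := fun {p q} h => by
    match p, q, h with
    | Sum.inl a, Sum.inl b, h => exact congrArg Sum.inl (eq_of_dist_eq_zero h)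
    | Sum.inl a, Sum.inr b, h =>
      exfalso
      have h1 := dist_nonneg (x := a) (y := x₀)
      have h2 := dist_nonneg (x := y₀) (y := b)
      have h' : dist a x₀ + 1 + dist y₀ b = 0 := h
      linarith
    | Sum.inr a, Sum.inl b, h =>
      exfalso
      have h1 := dist_nonneg (x := b) (y := x₀)
      have h2 := dist_nonneg (x := y₀) (y := a)
      have h' : dist b x₀ + 1 + dist y₀ a = 0 := h
      linarith
    | Sum.inr a, Sum.inr b, h => exact congrArg Sum.inr (eq_of_dist_eq_zero h)

/-- Condition (C): every coarse map into a coarse coproduct factors, up to closeness,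
through one of the coproduct injections. -/
def CondC (X : Type u) [MetricSpace X] : Prop :=
  ∀ (Y Z : Type u) [MetricSpace Y] [MetricSpace Z] (y₀ : Y) (z₀ : Z) (f : X → Y ⊕ Z),
    letI := coprodMetric y₀ z₀
    IsCoarse f →
      (∃ g : X → Y, IsCoarse g ∧ Close (Sum.inl ∘ g) f) ∨
      (∃ h : X → Z, IsCoarse h ∧ Close (Sum.inr ∘ h) f)
open Metric Bornology

-- basic rfl dist lemmas
section
variable {Y Z : Type*} [MetricSpace Y] [MetricSpace Z] (y₀ : Y) (z₀ : Z)

lemma coprod_dist_inl_inl : letI := coprodMetric y₀ z₀; ∀ a b : Y,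
    dist (Sum.inl a : Y ⊕ Z) (Sum.inl b) = dist a b := fun _ _ => rfl

lemma coprod_dist_inl_inr : letI := coprodMetric y₀ z₀; ∀ (a : Y) (b : Z),
    dist (Sum.inl a : Y ⊕ Z) (Sum.inr b) = dist a y₀ + 1 + dist z₀ b := fun _ _ => rfl

lemma coprod_dist_inr_inl : letI := coprodMetric y₀ z₀; ∀ (a : Z) (b : Y),
    dist (Sum.inr a : Y ⊕ Z) (Sum.inl b) = dist b y₀ + 1 + dist z₀ a := fun _ _ => rfl

lemma coprod_dist_inr_inr : letI := coprodMetric y₀ z₀; ∀ a b : Z,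
    dist (Sum.inr a : Y ⊕ Z) (Sum.inr b) = dist a b := fun _ _ => rfl
end

lemma one_lt_rank_euclidean {n : ℕ} (hn : 2 ≤ n) :
    1 < Module.rank ℝ (EuclideanSpace ℝ (Fin n)) := by
  have h : Module.finrank ℝ (EuclideanSpace ℝ (Fin n)) = n := finrank_euclideanSpace_fin
  rw [← Module.finrank_eq_rank, h]
  exact_mod_cast hn.trans_lt' one_lt_two
lemma joinedIn_radial {n : ℕ} {r : ℝ} {u : EuclideanSpace ℝ (Fin n)} (hu : r ≤ ‖u‖)
    {c : ℝ} (hc : 1 ≤ c) :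
    JoinedIn {x : EuclideanSpace ℝ (Fin n) | r ≤ ‖x‖} u (c • u) := by
  refine ⟨⟨⟨fun t => ((1 : ℝ) - t + t * c) • u, by fun_prop⟩, by simp, by simp⟩, ?_⟩
  intro t
  have ht0 : (0:ℝ) ≤ t := t.2.1
  have ht1 : (t:ℝ) ≤ 1 := t.2.2
  have h1 : (1:ℝ) ≤ 1 - t + t * c := by nlinarith
  show r ≤ ‖((1 : ℝ) - (t:ℝ) + t * c) • u‖
  rw [norm_smul, Real.norm_eq_abs, abs_of_pos (by linarith)]
  calc r ≤ ‖u‖ := hu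
    _ ≤ (1 - (t:ℝ) + t * c) * ‖u‖ := le_mul_of_one_le_left (norm_nonneg _) h1

lemma joinedIn_ge_norm {n : ℕ} (hn : 2 ≤ n) {r : ℝ} (hr : 0 < r)
    {u v : EuclideanSpace ℝ (Fin n)} (hu : r ≤ ‖u‖) (hv : r ≤ ‖v‖) :
    JoinedIn {x : EuclideanSpace ℝ (Fin n) | r ≤ ‖x‖} u v := by
  set ρ := max ‖u‖ ‖v‖ with hρ
  have hu0 : 0 < ‖u‖ := hr.trans_le hu
  have hv0 : 0 < ‖v‖ := hr.trans_le hv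
  have hρu : 1 ≤ ρ / ‖u‖ := (one_le_div hu0).2 (le_max_left _ _)
  have hρv : 1 ≤ ρ / ‖v‖ := (one_le_div hv0).2 (le_max_right _ _)
  have hρr : r ≤ ρ := le_trans hu (le_max_left _ _)
  have hnu : ‖(ρ / ‖u‖) • u‖ = ρ := by
    rw [norm_smul, Real.norm_eq_abs, abs_of_pos (by positivity)]
    field_simp
  have hnv : ‖(ρ / ‖v‖) • v‖ = ρ := by
    rw [norm_smul, Real.norm_eq_abs, abs_of_pos (by positivity)]
    field_simp
  have h1 : JoinedIn {x : EuclideanSpace ℝ (Fin n) | r ≤ ‖x‖} u ((ρ / ‖u‖) • u) :=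
    joinedIn_radial hu hρu
  have h3 : JoinedIn {x : EuclideanSpace ℝ (Fin n) | r ≤ ‖x‖} v ((ρ / ‖v‖) • v) :=
    joinedIn_radial hv hρv
  have h2 : JoinedIn {x : EuclideanSpace ℝ (Fin n) | r ≤ ‖x‖}
      ((ρ / ‖u‖) • u) ((ρ / ‖v‖) • v) := by
    have hs := isPathConnected_sphere (one_lt_rank_euclidean hn)
      (0 : EuclideanSpace ℝ (Fin n)) (le_trans hr.le hρr)
    refine (hs.joinedIn _ ?_ _ ?_).mono ?_
    · rw [mem_sphere_zero_iff_norm]; exact hnu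
    · rw [mem_sphere_zero_iff_norm]; exact hnv
    · intro x hx
      rw [mem_sphere_zero_iff_norm] at hx
      exact le_of_le_of_eq hρr hx.symm
  exact (h1.trans h2).trans h3.symm
lemma crossing {n : ℕ} (hn : 2 ≤ n) {Y Z : Type*} [MetricSpace Y] [MetricSpace Z]
    (y₀ : Y) (z₀ : Z) (f : EuclideanSpace ℝ (Fin n) → Y ⊕ Z) :
    letI := coprodMetric y₀ z₀
    ∀ (S M : ℝ), 0 ≤ M →
    (∀ x x', dist x x' ≤ 1 → dist (f x) (f x') ≤ S) →
    (∀ x, dist (f x) (Sum.inl y₀) ≤ S → ‖x‖ ≤ M) →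
    ∀ u v, M + 1 ≤ ‖u‖ → M + 1 ≤ ‖v‖ →
      (∃ a, f u = Sum.inl a) → (∃ b, f v = Sum.inr b) → False := by
  intro S M hM0 hS hM u v hu hv ha hb
  letI := coprodMetric y₀ z₀
  obtain ⟨a, ha⟩ := ha
  obtain ⟨b, hb⟩ := hb
  -- a path from u to v staying in norm ≥ M+1
  obtain ⟨γ, hγ⟩ := joinedIn_ge_norm hn (r := M + 1) (by linarith) hu hv
  have hmem : ∀ t ∈ Set.Icc (0:ℝ) 1, M + 1 ≤ ‖γ.extend t‖ := by
    intro t ht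
    rw [γ.extend_apply ht]
    exact hγ _
  set D : Set ℝ := {t | t ∈ Set.Icc (0:ℝ) 1 ∧ ∃ a, f (γ.extend t) = Sum.inl a} with hD
  have hD0 : (0:ℝ) ∈ D := ⟨⟨le_refl _, zero_le_one⟩, a, by rw [Path.extend_zero]; exact ha⟩
  have hDne : D.Nonempty := ⟨0, hD0⟩
  have hDbdd : BddAbove D := ⟨1, fun t ht => ht.1.2⟩
  set T := sSup D with hT
  have hT0 : 0 ≤ T := le_csSup hDbdd hD0
  have hT1 : T ≤ 1 := csSup_le hDne (fun t ht => ht.1.2)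
  have hcont : ContinuousAt γ.extend T := γ.continuous_extend.continuousAt
  rw [Metric.continuousAt_iff] at hcont
  obtain ⟨δ, hδ, hcont⟩ := hcont (1/2) (by norm_num)
  -- produce a crossing pair
  suffices hcross : ∃ x₁ x₂ : EuclideanSpace ℝ (Fin n),
      M + 1 ≤ ‖x₁‖ ∧ dist x₁ x₂ ≤ 1 ∧ (∃ a, f x₁ = Sum.inl a) ∧ (∀ a, f x₂ ≠ Sum.inl a) by
    obtain ⟨x₁, x₂, hx₁, hd12, ⟨a', ha'⟩, hx₂⟩ := hcross
    obtain ⟨b', hb'⟩ : ∃ b', f x₂ = Sum.inr b' := by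
      cases h : f x₂ with
      | inl a => exact absurd h (hx₂ a)
      | inr b => exact ⟨b, rfl⟩
    have hdf : dist (f x₁) (f x₂) ≤ S := hS _ _ hd12
    rw [ha', hb', coprod_dist_inl_inr] at hdf
    have hnear : dist (f x₁) (Sum.inl y₀) ≤ S := by
      rw [ha', coprod_dist_inl_inl]
      have := dist_nonneg (x := z₀) (y := b')
      linarith
    have := hM x₁ hnear
    linarith
  by_cases hTD : ∃ a, f (γ.extend T) = Sum.inl a
  · -- T is in D; points just after T are not in D
    have hTD' : T ∈ D := ⟨⟨hT0, hT1⟩, hTD⟩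
    have hTlt : T < 1 := by
      rcases lt_or_eq_of_le hT1 with h | h
      · exact h
      · exfalso
        obtain ⟨a', ha'⟩ := hTD
        rw [h, Path.extend_one, hb] at ha'
        cases ha'
    set t₂ := min (T + δ/2) 1 with ht₂
    have ht₂T : T < t₂ := lt_min (by linarith) hTlt
    have ht₂I : t₂ ∈ Set.Icc (0:ℝ) 1 := ⟨le_trans hT0 ht₂T.le, min_le_right _ _⟩
    have ht₂D : t₂ ∉ D := fun h => absurd (le_csSup hDbdd h) (not_le.2 ht₂T)
    have hdist : dist (γ.extend T) (γ.extend t₂) ≤ 1 := by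
      have : dist t₂ T < δ := by
        rw [Real.dist_eq, abs_of_pos (by linarith)]
        have : t₂ ≤ T + δ/2 := min_le_left _ _
        linarith
      have := hcont this
      rw [dist_comm]
      linarith
    refine ⟨γ.extend T, γ.extend t₂, hmem T ⟨hT0, hT1⟩, hdist, hTD, ?_⟩
    intro a' h
    exact ht₂D ⟨ht₂I, a', h⟩
  · -- T is not in D; points just before T are in D
    obtain ⟨t₁, ht₁D, ht₁⟩ : ∃ t₁ ∈ D, T - δ/2 < t₁ :=
      exists_lt_of_lt_csSup hDne (by linarith)
    have ht₁T : t₁ ≤ T := le_csSup hDbdd ht₁D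
    have hdist : dist (γ.extend t₁) (γ.extend T) ≤ 1 := by
      have : dist t₁ T < δ := by
        rw [Real.dist_eq, abs_lt]
        constructor <;> linarith
      have := hcont this
      linarith
    refine ⟨γ.extend t₁, γ.extend T, hmem t₁ ht₁D.1, hdist, ht₁D.2, ?_⟩
    intro a' h
    exact hTD ⟨a', h⟩
lemma buildG {n : ℕ} (hn : 2 ≤ n) {Y Z : Type*} [MetricSpace Y] [MetricSpace Z]
    (y₀ : Y) (z₀ : Z) (f : EuclideanSpace ℝ (Fin n) → Y ⊕ Z) :
    letI := coprodMetric y₀ z₀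
    IsCoarse f → ∀ (r : ℝ), 0 < r →
    (∀ x, r ≤ ‖x‖ → ∃ a, f x = Sum.inl a) →
    ∃ g, IsCoarse g ∧ Close (Sum.inl ∘ g) f := by
  intro hf r hr hside
  letI := coprodMetric y₀ z₀
  obtain ⟨hb, hp⟩ := hf
  set g : EuclideanSpace ℝ (Fin n) → Y := fun x => Sum.elim id (fun _ => y₀) (f x) with hg
  -- a point of norm exactly r
  have hnpos : 0 < n := by omega
  set e : EuclideanSpace ℝ (Fin n) := EuclideanSpace.single (⟨0, hnpos⟩ : Fin n) (1:ℝ) with he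
  have hne : ‖e‖ = 1 := by rw [he, EuclideanSpace.norm_single]; simp
  set x₁ : EuclideanSpace ℝ (Fin n) := r • e with hx₁
  have hnx₁ : ‖x₁‖ = r := by
    rw [hx₁, norm_smul, hne, Real.norm_eq_abs, abs_of_pos hr, mul_one]
  obtain ⟨Sc, hSc, hSc1⟩ := hb (2 * r + 1) (by linarith)
  -- key closeness bound
  have hclose : ∀ x, dist ((Sum.inl (g x)) : Y ⊕ Z) (f x) ≤ Sc := by
    intro x
    cases hfx : f x with
    | inl a =>
      have : g x = a := by rw [hg]; simp [hfx]
      rw [this, coprod_dist_inl_inl]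
      simp [hSc.le]
    | inr b =>
      have hgx : g x = y₀ := by rw [hg]; simp [hfx]
      have hxr : ‖x‖ < r := by
        by_contra h
        obtain ⟨a, ha⟩ := hside x (not_lt.1 h)
        rw [ha] at hfx
        cases hfx
      have hdx : dist x x₁ ≤ 2 * r + 1 := by
        have h1 : dist x x₁ ≤ ‖x‖ + ‖x₁‖ := by
          rw [dist_eq_norm]
          exact (norm_sub_le _ _)
        rw [hnx₁] at h1
        linarith
      obtain ⟨a₁, ha₁⟩ := hside x₁ hnx₁.ge
      have h2 : dist (f x) (f x₁) ≤ Sc := hSc1 _ _ hdx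
      rw [hfx, ha₁, coprod_dist_inr_inl] at h2
      rw [hgx, coprod_dist_inl_inr]
      have := dist_nonneg (x := a₁) (y := y₀)
      have h0 : dist y₀ y₀ = 0 := dist_self _
      linarith
  refine ⟨g, ⟨?_, ?_⟩, ⟨Sc, hSc, fun x => hclose x⟩⟩
  · -- bornologous
    intro R hR
    obtain ⟨S, hS, hS1⟩ := hb R hR
    refine ⟨S + 2 * Sc, by linarith, fun x x' hxx' => ?_⟩
    have h1 : dist (g x) (g x') = dist ((Sum.inl (g x)) : Y ⊕ Z) (Sum.inl (g x')) :=
      (coprod_dist_inl_inl y₀ z₀ _ _).symm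
    rw [h1]
    have h2 := dist_triangle4 ((Sum.inl (g x)) : Y ⊕ Z) (f x) (f x') (Sum.inl (g x'))
    have h3 := hclose x
    have h4 := hclose x'
    have h5 : dist (f x') ((Sum.inl (g x')) : Y ⊕ Z) = dist ((Sum.inl (g x')) : Y ⊕ Z) (f x') :=
      dist_comm _ _
    have h6 := hS1 x x' hxx'
    linarith
  · -- proper
    intro B hB
    obtain ⟨K, hK⟩ := hB.subset_closedBall y₀
    have hsub : g ⁻¹' B ⊆ f ⁻¹' (Metric.closedBall (Sum.inl y₀ : Y ⊕ Z) (K + Sc)) := by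
      intro x hx
      have hgK : dist (g x) y₀ ≤ K := hK hx
      have h1 : dist (f x) ((Sum.inl y₀) : Y ⊕ Z) ≤
          dist (f x) ((Sum.inl (g x)) : Y ⊕ Z) + dist ((Sum.inl (g x)) : Y ⊕ Z) (Sum.inl y₀) :=
        dist_triangle _ _ _
      have h2 : dist ((Sum.inl (g x)) : Y ⊕ Z) (Sum.inl y₀) = dist (g x) y₀ :=
        coprod_dist_inl_inl y₀ z₀ _ _
      have h3 : dist (f x) ((Sum.inl (g x)) : Y ⊕ Z) = dist ((Sum.inl (g x)) : Y ⊕ Z) (f x) :=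
        dist_comm _ _
      have h4 := hclose x
      simp only [Set.mem_preimage, Metric.mem_closedBall]
      linarith
    exact (hp _ Metric.isBounded_closedBall).subset hsub
lemma coprod_swap_dist {Y Z : Type*} [MetricSpace Y] [MetricSpace Z] (y₀ : Y) (z₀ : Z) :
    letI := coprodMetric y₀ z₀
    letI := coprodMetric z₀ y₀
    ∀ p q : Y ⊕ Z, dist p.swap q.swap = dist p q := by
  intro p q
  letI := coprodMetric y₀ z₀
  letI := coprodMetric z₀ y₀
  cases p with
  | inl a =>
    cases q with
    | inl b => rfl
    | inr b =>
      show dist (Sum.inr a : Z ⊕ Y) (Sum.inl b) = dist (Sum.inl a : Y ⊕ Z) (Sum.inr b)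
      rw [coprod_dist_inr_inl z₀ y₀, coprod_dist_inl_inr y₀ z₀, dist_comm b z₀, dist_comm y₀ a]
      ring
  | inr a =>
    cases q with
    | inl b =>
      show dist (Sum.inl a : Z ⊕ Y) (Sum.inr b) = dist (Sum.inr a : Y ⊕ Z) (Sum.inl b)
      rw [coprod_dist_inl_inr z₀ y₀, coprod_dist_inr_inl y₀ z₀, dist_comm a z₀, dist_comm y₀ b]
      ring
    | inr b => rfl

lemma condC_euclidean {n : ℕ} (hn : 2 ≤ n) : CondC (EuclideanSpace ℝ (Fin n)) := by
  intro Y Z _ _ y₀ z₀ f hf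
  letI := coprodMetric y₀ z₀
  obtain ⟨hb, hp⟩ := hf
  obtain ⟨S, hS, hS1⟩ := hb 1 one_pos
  have hbd1 : IsBounded (f ⁻¹' Metric.closedBall ((Sum.inl y₀) : Y ⊕ Z) S) :=
    hp _ Metric.isBounded_closedBall
  obtain ⟨M₀, hM₀⟩ := hbd1.subset_closedBall 0
  set M := max M₀ 0 with hMdef
  have hM0 : 0 ≤ M := le_max_right _ _
  have hM : ∀ x, dist (f x) ((Sum.inl y₀) : Y ⊕ Z) ≤ S → ‖x‖ ≤ M := by
    intro x hx
    have h1 : x ∈ Metric.closedBall (0 : EuclideanSpace ℝ (Fin n)) M₀ := hM₀ hx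
    rw [Metric.mem_closedBall, dist_zero_right] at h1
    exact le_trans h1 (le_max_left _ _)
  by_cases hcase : ∀ x, M + 1 ≤ ‖x‖ → ∃ a, f x = Sum.inl a
  · left
    exact buildG hn y₀ z₀ f ⟨hb, hp⟩ (M + 1) (by linarith) hcase
  · right
    push_neg at hcase
    obtain ⟨v, hvr, hv⟩ := hcase
    have hvb : ∃ b, f v = Sum.inr b := by
      cases h : f v with
      | inl a => exact absurd h (hv a)
      | inr b => exact ⟨b, rfl⟩
    have hside : ∀ x, M + 1 ≤ ‖x‖ → ∃ b, f x = Sum.inr b := by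
      intro x hx
      cases h : f x with
      | inl a =>
        exact (crossing hn y₀ z₀ f S M hM0 hS1 hM x v hx hvr ⟨a, h⟩ hvb).elim
      | inr b => exact ⟨b, rfl⟩
    -- swap
    letI := coprodMetric z₀ y₀
    set f' : EuclideanSpace ℝ (Fin n) → Z ⊕ Y := Sum.swap ∘ f with hf'
    have hf'dist : ∀ x x', dist (f' x) (f' x') = dist (f x) (f x') := by
      intro x x'
      exact coprod_swap_dist y₀ z₀ (f x) (f x')
    have hcoarse' : IsCoarse f' := by
      constructor
      · intro R hR
        obtain ⟨S', hS', h'⟩ := hb R hR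
        exact ⟨S', hS', fun x x' hxx' => by rw [hf'dist]; exact h' x x' hxx'⟩
      · intro B hB
        have : f' ⁻¹' B = f ⁻¹' (Sum.swap ⁻¹' B) := rfl
        rw [this]
        apply hp
        rw [Metric.isBounded_iff] at hB ⊢
        obtain ⟨C, hC⟩ := hB
        refine ⟨C, fun x hx y hy => ?_⟩
        have := hC hx hy
        rw [← coprod_swap_dist y₀ z₀ x y]
        exact this
    have hside' : ∀ x, M + 1 ≤ ‖x‖ → ∃ b, f' x = Sum.inl b := by
      intro x hx
      obtain ⟨b, hbx⟩ := hside x hx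
      exact ⟨b, by rw [hf']; simp [hbx]⟩
    obtain ⟨g, hg, R, hR, hclose⟩ :=
      buildG hn z₀ y₀ f' hcoarse' (M + 1) (by linarith) hside'
    refine ⟨g, hg, R, hR, fun x => ?_⟩
    have h1 := hclose x
    have h2 : dist ((Sum.inr (g x)) : Y ⊕ Z) (f x) =
        dist ((Sum.inl (g x)) : Z ⊕ Y) (f' x) := by
      rw [← coprod_swap_dist y₀ z₀ (Sum.inr (g x)) (f x)]
      rfl
    simpa [h2] using h1
lemma not_condC_real : ¬ CondC ℝ := by
  intro h
  letI := coprodMetric (0:ℝ) (0:ℝ)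
  set fline : ℝ → ℝ ⊕ ℝ := fun x => if 0 ≤ x then Sum.inl x else Sum.inr x with hfl
  have hfcoarse : IsCoarse fline := by
    constructor
    · intro R hR
      refine ⟨R + 1, by linarith, fun x x' hxx' => ?_⟩
      have habs : |x - x'| ≤ R := by rwa [Real.dist_eq] at hxx'
      have h1 := abs_le.1 habs
      by_cases h0 : 0 ≤ x <;> by_cases h0' : 0 ≤ x'
      · simp only [hfl, if_pos h0, if_pos h0', coprod_dist_inl_inl]
        rw [Real.dist_eq]; linarith
      · simp only [hfl, if_pos h0, if_neg h0', coprod_dist_inl_inr]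
        rw [Real.dist_eq, Real.dist_eq]
        rw [abs_of_nonneg (by linarith : (0:ℝ) ≤ x - 0), abs_of_nonneg (by push_neg at h0'; linarith : (0:ℝ) ≤ 0 - x')]
        push_neg at h0'
        linarith
      · simp only [hfl, if_neg h0, if_pos h0', coprod_dist_inr_inl]
        rw [Real.dist_eq, Real.dist_eq]
        rw [abs_of_nonneg (by linarith : (0:ℝ) ≤ x' - 0), abs_of_nonneg (by push_neg at h0; linarith : (0:ℝ) ≤ 0 - x)]
        push_neg at h0
        linarith
      · simp only [hfl, if_neg h0, if_neg h0', coprod_dist_inr_inr]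
        rw [Real.dist_eq]; linarith
    · intro B hB
      obtain ⟨K, hK⟩ := hB.subset_closedBall ((Sum.inl 0) : ℝ ⊕ ℝ)
      apply (Metric.isBounded_closedBall (x := (0:ℝ)) (r := K + 1)).subset
      intro x hx
      have h1 : dist (fline x) ((Sum.inl 0) : ℝ ⊕ ℝ) ≤ K := hK hx
      rw [Metric.mem_closedBall]
      by_cases h0 : 0 ≤ x
      · have : fline x = Sum.inl x := if_pos h0
        rw [this, coprod_dist_inl_inl] at h1
        linarith
      · have : fline x = Sum.inr x := if_neg h0
        rw [this, coprod_dist_inr_inl] at h1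
        have h2 : dist x 0 = dist 0 x := dist_comm _ _
        have h3 : dist (0:ℝ) 0 = 0 := dist_self _
        linarith
  rcases h ℝ ℝ 0 0 fline hfcoarse with ⟨g, _, R, hR, hclose⟩ | ⟨g, _, R, hR, hclose⟩
  · have hx := hclose (-(R + 1))
    have hfx : fline (-(R + 1)) = Sum.inr (-(R + 1)) := if_neg (by linarith)
    rw [Function.comp_apply, hfx, coprod_dist_inl_inr] at hx
    have h1 := dist_nonneg (x := g (-(R+1))) (y := (0:ℝ))
    have h2 : dist (0:ℝ) (-(R+1)) = R + 1 := by
      rw [Real.dist_eq]; rw [abs_of_nonneg] <;> linarith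
    linarith
  · have hx := hclose (R + 1)
    have hfx : fline (R + 1) = Sum.inl (R + 1) := if_pos (by linarith)
    rw [Function.comp_apply, hfx, coprod_dist_inr_inl] at hx
    have h1 := dist_nonneg (x := (0:ℝ)) (y := g (R+1))
    have h2 : dist (R+1 : ℝ) 0 = R + 1 := by
      rw [Real.dist_eq]; rw [abs_of_nonneg] <;> linarith
    linarith


/-- Euclidean space `ℝⁿ` satisfies condition (C) for every `n ≥ 2` (so has
connected Higson corona), but `ℝ` does not satisfy condition (C). -/
theorem euclidean_condC_iff :
    (∀ n : ℕ, 2 ≤ n → CondC (EuclideanSpace ℝ (Fin n))) ∧ ¬ CondC ℝ :=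
  ⟨fun _ hn => condC_euclidean hn, not_condC_real⟩
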